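/- Let K be a field of characteristic zero, X a finite connected poset, and fix u_0 ∈ X. Then each diagonality-preserving φ ∈ Δ(I(X,K)) is uniquely representable in the form φ = φ_σ + φ_κ, where σ : X²_< → K is a map constant on chains and constant on cycles in X and κ : X → K is a map. -/

import Mathlib

open scoped Classical

noncomputable section

attribute [local instance 100] LieRing.ofAssociativeRing

/-- A `1/2`-derivation of a Lie algebra `L` over `K`:
`φ ⁅a, b⁆ = (1/2) • (⁅φ a, b⁆ + ⁅a, φ b⁆)`. -/
def IsHalfDerivation (K L : Type*) [Field K] [LieRing L] [LieAlgebra K L]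
    (φ : L →ₗ[K] L) : Prop :=
  ∀ a b : L, φ ⁅a, b⁆ = (2⁻¹ : K) • (⁅φ a, b⁆ + ⁅a, φ b⁆)

/-- The standard basis element `e_{xy}` (for `x ≤ y`) of the incidence algebra. -/
def eI (K : Type*) {X : Type*} [Field K] [PartialOrder X] [DecidableEq X]
    (x y : X) (h : x ≤ y) : IncidenceAlgebra K X :=
  ⟨fun u v => if x = u ∧ y = v then (1 : K) else 0, by
    intro u v huv
    show (if x = u ∧ y = v then (1 : K) else 0) = 0
    rw [if_neg]; rintro ⟨rfl, rfl⟩; exact huv h⟩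

/-- Diagonal elements of the incidence algebra (the subspace `D(X,K)`). -/
def IsDiagI {K X : Type*} [Zero K] [LE X] (f : IncidenceAlgebra K X) : Prop :=
  ∀ x y : X, x ≠ y → f x y = 0

/-- A walk `u 0, u 1, …, u m` in a poset: consecutive vertices are comparable and
cover one another (`l(x,y) = 1`). -/
def IsWalkOn {X : Type*} [PartialOrder X] (u : ℕ → X) (m : ℕ) : Prop :=
  ∀ i < m, u i ⋖ u (i + 1) ∨ u (i + 1) ⋖ u i

/-- A poset is connected if any two of its elements are joined by a walk. -/
def ConnectedPoset (X : Type*) [PartialOrder X] : Prop :=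
  ∀ x y : X, ∃ (u : ℕ → X) (m : ℕ), IsWalkOn u m ∧ u 0 = x ∧ u m = y

/-- The set `X²_<` of pairs `(x, y)` with `x < y`. -/
def LtPairs (X : Type*) [PartialOrder X] : Type _ := {p : X × X // p.1 < p.2}

/-- The value of `σ : X²_< → K` at `(x, y)`, extended by `0` to all pairs. -/
def sigVal {K X : Type*} [Field K] [PartialOrder X] (σ : LtPairs X → K) (x y : X) : K :=
  if h : x < y then σ ⟨(x, y), h⟩ else 0

/-- `s⁺_{σ,Γ}(x) = Σ_{x = u i < u (i+1)} σ (x, u (i+1))`. -/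
def sP {K X : Type*} [Field K] [PartialOrder X] (σ : LtPairs X → K)
    (u : ℕ → X) (m : ℕ) (x : X) : K :=
  ∑ i ∈ Finset.range m, if x = u i then sigVal σ x (u (i + 1)) else 0

/-- `s⁻_{σ,Γ}(x) = Σ_{u i > u (i+1) = x} σ (x, u i)`. -/
def sM {K X : Type*} [Field K] [PartialOrder X] (σ : LtPairs X → K)
    (u : ℕ → X) (m : ℕ) (x : X) : K :=
  ∑ i ∈ Finset.range m, if x = u (i + 1) then sigVal σ x (u i) else 0

/-- `t⁺_{σ,Γ}(x) = Σ_{x = u i > u (i+1)} σ (u (i+1), x)`. -/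
def tP {K X : Type*} [Field K] [PartialOrder X] (σ : LtPairs X → K)
    (u : ℕ → X) (m : ℕ) (x : X) : K :=
  ∑ i ∈ Finset.range m, if x = u i then sigVal σ (u (i + 1)) x else 0

/-- `t⁻_{σ,Γ}(x) = Σ_{u i < u (i+1) = x} σ (u i, x)`. -/
def tM {K X : Type*} [Field K] [PartialOrder X] (σ : LtPairs X → K)
    (u : ℕ → X) (m : ℕ) (x : X) : K :=
  ∑ i ∈ Finset.range m, if x = u (i + 1) then sigVal σ (u i) x else 0

/-- A cycle: a closed walk `u 0, …, u m = u 0` with `m ≥ 4` such that repeated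
vertices occur only at the pair of indices `{0, m}`. -/
def IsCycleW {X : Type*} [PartialOrder X] (u : ℕ → X) (m : ℕ) : Prop :=
  IsWalkOn u m ∧ u m = u 0 ∧ 4 ≤ m ∧
    ∀ i ≤ m, ∀ j ≤ m, i ≠ j → u i = u j → (i = 0 ∧ j = m) ∨ (i = m ∧ j = 0)

/-- `σ` is constant on cycles. -/
def ConstOnCycles {K X : Type*} [Field K] [PartialOrder X] (σ : LtPairs X → K) : Prop :=
  ∀ (u : ℕ → X) (m : ℕ), IsCycleW u m →
    ∃ k : K, ∀ i < m,
      (∀ h : u i < u (i + 1), σ ⟨(u i, u (i + 1)), h⟩ = k) ∧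
      (∀ h : u (i + 1) < u i, σ ⟨(u (i + 1), u i), h⟩ = k)

/-- `σ` is constant on chains: `σ (x, y) = σ (u, v)` whenever `x < y` and `u < v` all
belong to a common chain, i.e. `{x, y, u, v}` is pairwise comparable. -/
def ConstOnChains {K X : Type*} [Field K] [PartialOrder X] (σ : LtPairs X → K) : Prop :=
  ∀ (x y u v : X) (h1 : x < y) (h2 : u < v),
    (x ≤ u ∨ u ≤ x) → (x ≤ v ∨ v ≤ x) → (y ≤ u ∨ u ≤ y) → (y ≤ v ∨ v ≤ y) →
      σ ⟨(x, y), h1⟩ = σ ⟨(u, v), h2⟩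

section Helpers
set_option linter.unusedSectionVars false

variable {K X : Type*} [Field K] [CharZero K] [PartialOrder X] [Fintype X]
    [LocallyFiniteOrder X] [DecidableEq X]

lemma eI_apply (x y : X) (h : x ≤ y) (u v : X) :
    eI K x y h u v = if x = u ∧ y = v then (1 : K) else 0 := rfl

lemma eI_mul_apply (x y : X) (h : x ≤ y) (f : IncidenceAlgebra K X) (u v : X) :
    (eI K x y h * f) u v = if x = u then f y v else 0 := by
  rw [IncidenceAlgebra.mul_apply]
  by_cases hxu : x = u
  · subst hxu
    simp only [eI_apply, if_pos rfl, true_and, ite_mul, one_mul, zero_mul]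
    rw [Finset.sum_ite_eq (Finset.Icc x v) y fun w => f w v]
    by_cases hyv : y ∈ Finset.Icc x v
    · rw [if_pos hyv]; simp
    · rw [if_neg hyv]
      rw [Finset.mem_Icc] at hyv
      push_neg at hyv
      exact (IncidenceAlgebra.apply_eq_zero_of_not_le (hyv h) f).symm
  · rw [if_neg hxu]
    apply Finset.sum_eq_zero
    intro w _
    rw [eI_apply, if_neg (fun hh => hxu hh.1), zero_mul]

lemma mul_eI_apply (x y : X) (h : x ≤ y) (f : IncidenceAlgebra K X) (u v : X) :
    (f * eI K x y h) u v = if y = v then f u x else 0 := by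
  rw [IncidenceAlgebra.mul_apply]
  by_cases hyv : y = v
  · subst hyv
    simp only [eI_apply, and_true, mul_ite, mul_one, mul_zero]
    rw [Finset.sum_ite_eq (Finset.Icc u y) x fun w => f u w]
    by_cases hx : x ∈ Finset.Icc u y
    · rw [if_pos hx]; simp
    · rw [if_neg hx, if_pos trivial]
      rw [Finset.mem_Icc] at hx
      push_neg at hx
      by_cases hux : u ≤ x
      · exact absurd h (hx hux)
      · exact (IncidenceAlgebra.apply_eq_zero_of_not_le hux f).symm
  · rw [if_neg hyv]
    apply Finset.sum_eq_zero
    intro w _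
    rw [eI_apply, if_neg (fun hh => hyv hh.2), mul_zero]

lemma diag_mul_apply {D : IncidenceAlgebra K X} (hD : IsDiagI D)
    (f : IncidenceAlgebra K X) (u v : X) : (D * f) u v = D u u * f u v := by
  rw [IncidenceAlgebra.mul_apply]
  by_cases huv : u ≤ v
  · rw [Finset.sum_eq_single u]
    · intro w hw hne; rw [hD u w (Ne.symm hne), zero_mul]
    · intro hmem; exact absurd (Finset.mem_Icc.2 ⟨le_rfl, huv⟩) hmem
  · rw [Finset.Icc_eq_empty huv, Finset.sum_empty,
      IncidenceAlgebra.apply_eq_zero_of_not_le huv f, mul_zero]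

lemma mul_diag_apply {D : IncidenceAlgebra K X} (hD : IsDiagI D)
    (f : IncidenceAlgebra K X) (u v : X) : (f * D) u v = f u v * D v v := by
  rw [IncidenceAlgebra.mul_apply]
  by_cases huv : u ≤ v
  · rw [Finset.sum_eq_single v]
    · intro w hw hne; rw [hD w v hne, mul_zero]
    · intro hmem; exact absurd (Finset.mem_Icc.2 ⟨huv, le_rfl⟩) hmem
  · rw [Finset.Icc_eq_empty huv, Finset.sum_empty,
      IncidenceAlgebra.apply_eq_zero_of_not_le huv f, zero_mul]

lemma lie_applyI (a b : IncidenceAlgebra K X) (u v : X) :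
    (⁅a, b⁆ : IncidenceAlgebra K X) u v = (a * b) u v - (b * a) u v := by
  rw [Ring.lie_def, IncidenceAlgebra.sub_apply]

lemma mul_diag_entry (a b : IncidenceAlgebra K X) (x : X) :
    (a * b) x x = a x x * b x x := by
  rw [IncidenceAlgebra.mul_apply, Finset.Icc_self, Finset.sum_singleton]

lemma lie_diag_entry (a b : IncidenceAlgebra K X) (x : X) :
    (⁅a, b⁆ : IncidenceAlgebra K X) x x = 0 := by
  rw [lie_applyI, mul_diag_entry, mul_diag_entry, mul_comm, sub_self]

lemma eI_diag (x : X) : IsDiagI (eI K x x le_rfl) := by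
  intro u v huv
  rw [eI_apply, if_neg]
  rintro ⟨rfl, rfl⟩; exact huv rfl

end Helpers

section Core
set_option linter.unusedSectionVars false
set_option maxHeartbeats 1000000

variable {K X : Type*} [Field K] [CharZero K] [PartialOrder X] [Fintype X]
    [LocallyFiniteOrder X] [DecidableEq X]
variable (φ : IncidenceAlgebra K X →ₗ[K] IncidenceAlgebra K X)

lemma lie_ex_e (x y : X) (h : x < y) :
    ⁅eI K x x le_rfl, eI K x y h.le⁆ = eI K x y h.le := by
  ext u v _
  rw [lie_applyI, eI_mul_apply, mul_eI_apply, eI_apply, eI_apply, eI_apply]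
  split_ifs <;> (try simp_all) <;> (try aesop)

lemma lie_e_ey (x y : X) (h : x < y) :
    ⁅eI K x y h.le, eI K y y le_rfl⁆ = eI K x y h.le := by
  ext u v _
  rw [lie_applyI, eI_mul_apply, mul_eI_apply, eI_apply, eI_apply, eI_apply]
  split_ifs <;> (try simp_all) <;> (try aesop)

lemma lie_ez_e (x y z : X) (h : x < y) (hzx : z ≠ x) (hzy : z ≠ y) :
    ⁅eI K z z le_rfl, eI K x y h.le⁆ = 0 := by
  ext u v _
  rw [lie_applyI, eI_mul_apply, mul_eI_apply, eI_apply, eI_apply, IncidenceAlgebra.zero_apply]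
  split_ifs <;> simp_all

lemma phi_e_lt (hφ : IsHalfDerivation K (IncidenceAlgebra K X) φ)
    (hdiag : ∀ f : IncidenceAlgebra K X, IsDiagI f → IsDiagI (φ f))
    (x y : X) (h : x < y) :
    φ (eI K x y h.le)
      = (φ (eI K x x le_rfl) x x - φ (eI K x x le_rfl) y y) • eI K x y h.le := by
  have hD : IsDiagI (φ (eI K x x le_rfl)) := hdiag _ (eI_diag x)
  set D := φ (eI K x x le_rfl) with hDdef
  set e := eI K x y h.le with hedef
  set f := φ e with hfdef
  have heq : f = (2⁻¹ : K) • (⁅D, e⁆ + ⁅eI K x x le_rfl, f⁆) := by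
    have h2 := hφ (eI K x x le_rfl) e
    rwa [hedef, lie_ex_e x y h, ← hedef] at h2
  ext u v huv
  have hent : f u v = (2⁻¹ : K) * ((D u u * e u v - e u v * D v v)
      + ((if x = u then f x v else 0) - (if x = v then f u x else 0))) := by
    conv_lhs => rw [heq]
    rw [IncidenceAlgebra.constSMul_apply, IncidenceAlgebra.add_apply, lie_applyI, lie_applyI,
      diag_mul_apply hD, mul_diag_apply hD, eI_mul_apply, mul_eI_apply, smul_eq_mul]
  rw [IncidenceAlgebra.constSMul_apply, smul_eq_mul]
  by_cases hu : x = u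
  · subst hu
    by_cases hv : y = v
    · subst hv
      rw [if_pos rfl, if_neg h.ne] at hent
      have hexy : e x y = 1 := by rw [hedef, eI_apply, if_pos ⟨rfl, rfl⟩]
      rw [hexy] at hent ⊢
      linear_combination (2 : K) * hent
    · have hev : e x v = 0 := by
        rw [hedef, eI_apply, if_neg]; rintro ⟨-, rfl⟩; exact hv rfl
      rw [hev] at hent ⊢
      by_cases hvx : x = v
      · subst hvx
        simp only [if_pos rfl] at hent
        linear_combination hent
      · rw [if_pos rfl, if_neg hvx] at hent
        linear_combination (2 : K) * hent
  · have hev : e u v = 0 := by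
      rw [hedef, eI_apply, if_neg]; rintro ⟨rfl, -⟩; exact hu rfl
    rw [hev] at hent ⊢
    rw [if_neg hu] at hent
    by_cases hvx : x = v
    · rw [if_pos hvx] at hent
      have heux : e u x = 0 := by
        rw [hedef, eI_apply, if_neg]; rintro ⟨rfl, -⟩; exact hu rfl
      have h3 : (3 : K) * f u v = 0 := by
        subst hvx
        linear_combination (2 : K) * hent
      have := mul_eq_zero.1 h3
      rcases this with h3' | h3'
      · exact absurd h3' (by norm_num)
      · rw [h3']; ring
    · rw [if_neg hvx] at hent
      linear_combination hent

/-- B': the σ value computed from the bottom equals the one computed from the top. -/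
lemma sig_symm (hφ : IsHalfDerivation K (IncidenceAlgebra K X) φ)
    (hdiag : ∀ f : IncidenceAlgebra K X, IsDiagI f → IsDiagI (φ f))
    (x y : X) (h : x < y) :
    φ (eI K x x le_rfl) x x - φ (eI K x x le_rfl) y y
      = φ (eI K y y le_rfl) y y - φ (eI K y y le_rfl) x x := by
  have hD : IsDiagI (φ (eI K y y le_rfl)) := hdiag _ (eI_diag y)
  set D := φ (eI K y y le_rfl) with hDdef
  set e := eI K x y h.le with hedef
  set s : K := φ (eI K x x le_rfl) x x - φ (eI K x x le_rfl) y y with hsdef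
  have hB : φ e = s • e := phi_e_lt φ hφ hdiag x y h
  have heq : φ e = (2⁻¹ : K) • (⁅φ e, eI K y y le_rfl⁆ + ⁅e, D⁆) := by
    have h2 := hφ e (eI K y y le_rfl)
    rwa [hedef, lie_e_ey x y h, ← hedef] at h2
  have hent := congrArg (fun g : IncidenceAlgebra K X => g x y) heq
  rw [hB] at hent
  simp only [IncidenceAlgebra.constSMul_apply, IncidenceAlgebra.add_apply, lie_applyI,
    mul_eI_apply, eI_mul_apply, diag_mul_apply hD, mul_diag_apply hD] at hent
  rw [if_pos trivial, if_neg (fun hh : y = x => h.ne hh.symm)] at hent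
  have hexy : e x y = 1 := by rw [hedef, eI_apply, if_pos ⟨rfl, rfl⟩]
  rw [hexy] at hent
  rw [smul_eq_mul, smul_eq_mul] at hent
  linear_combination (2 : K) * hent

/-- C: the diagonal of `φ e_z` takes equal values at comparable pairs avoiding `z`. -/
lemma diag_const (hφ : IsHalfDerivation K (IncidenceAlgebra K X) φ)
    (hdiag : ∀ f : IncidenceAlgebra K X, IsDiagI f → IsDiagI (φ f))
    (x y z : X) (h : x < y) (hzx : z ≠ x) (hzy : z ≠ y) :
    φ (eI K z z le_rfl) x x = φ (eI K z z le_rfl) y y := by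
  have hD : IsDiagI (φ (eI K z z le_rfl)) := hdiag _ (eI_diag z)
  set D := φ (eI K z z le_rfl) with hDdef
  set e := eI K x y h.le with hedef
  have heq : (0 : IncidenceAlgebra K X) = (2⁻¹ : K) • (⁅D, e⁆ + ⁅eI K z z le_rfl, φ e⁆) := by
    have h2 := hφ (eI K z z le_rfl) e
    rwa [hedef, lie_ez_e x y z h hzx hzy, ← hedef, map_zero] at h2
  have hent := congrArg (fun g : IncidenceAlgebra K X => g x y) heq
  simp only [IncidenceAlgebra.constSMul_apply, IncidenceAlgebra.add_apply, lie_applyI,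
    diag_mul_apply hD, mul_diag_apply hD, eI_mul_apply, mul_eI_apply,
    IncidenceAlgebra.zero_apply, smul_eq_mul] at hent
  rw [if_neg (fun hh : z = x => hzx hh), if_neg (fun hh : z = y => hzy hh)] at hent
  have hexy : e x y = 1 := by rw [hedef, eI_apply, if_pos ⟨rfl, rfl⟩]
  rw [hexy] at hent
  linear_combination (-2 : K) * hent

end Core

section Comb
set_option linter.unusedSectionVars false
set_option maxHeartbeats 1000000

variable {K X : Type*} [Field K] [PartialOrder X]
variable (a : X → X → K)

/-- The σ-value extracted from a diagonal family `a`. -/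
def sOf (x y : X) : K := a x x - a x y

variable {a}

lemma sOf_D1 (hP2 : ∀ x y z : X, x < y → z ≠ x → z ≠ y → a z x = a z y)
    {x y z : X} (hxy : x < y) (hyz : y < z) : sOf a x y = sOf a x z := by
  unfold sOf
  rw [hP2 y z x hyz hxy.ne (hxy.trans hyz).ne]

lemma sOf_D2 (hP1 : ∀ x y : X, x < y → a x x - a x y = a y y - a y x)
    (hP2 : ∀ x y z : X, x < y → z ≠ x → z ≠ y → a z x = a z y)
    {x y z : X} (hxy : x < y) (hyz : y < z) : sOf a y z = sOf a x z := by
  unfold sOf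
  rw [hP1 y z hyz, ← hP2 x y z hxy (hxy.trans hyz).ne' hyz.ne', ← hP1 x z (hxy.trans hyz)]

lemma sOf_pair_left (hP2 : ∀ x y z : X, x < y → z ≠ x → z ≠ y → a z x = a z y)
    {x y v : X} (hxy : x < y) (hxv : x < v) (hc : y ≤ v ∨ v ≤ y) :
    sOf a x y = sOf a x v := by
  rcases hc with hc | hc
  · rcases hc.lt_or_eq with hlt | rfl
    · exact sOf_D1 hP2 hxy hlt
    · rfl
  · rcases hc.lt_or_eq with hlt | rfl
    · exact (sOf_D1 hP2 hxv hlt).symm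
    · rfl

lemma sOf_chains (hP1 : ∀ x y : X, x < y → a x x - a x y = a y y - a y x)
    (hP2 : ∀ x y z : X, x < y → z ≠ x → z ≠ y → a z x = a z y)
    {x y u v : X} (h1 : x < y) (h2 : u < v)
    (c1 : x ≤ u ∨ u ≤ x) (c4 : y ≤ v ∨ v ≤ y) :
    sOf a x y = sOf a u v := by
  rcases c1 with hc | hc
  · rcases hc.lt_or_eq with hlt | rfl
    · have hxv : x < v := hlt.trans h2
      calc sOf a x y = sOf a x v := sOf_pair_left hP2 h1 hxv c4
        _ = sOf a u v := (sOf_D2 hP1 hP2 hlt h2).symm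
    · exact sOf_pair_left hP2 h1 h2 c4
  · rcases hc.lt_or_eq with hlt | rfl
    · have huy : u < y := hlt.trans h1
      calc sOf a x y = sOf a u y := sOf_D2 hP1 hP2 hlt h1
        _ = sOf a u v := sOf_pair_left hP2 huy h2 c4
    · exact sOf_pair_left hP2 h1 h2 c4

lemma sOf_around (hP2 : ∀ x y z : X, x < y → z ≠ x → z ≠ y → a z x = a z y)
    {u : ℕ → X} {m : ℕ} (hwalk : IsWalkOn u m) (hclose : u m = u 0)
    (hinj : ∀ i ≤ m, ∀ j ≤ m, i ≠ j → u i = u j → (i = 0 ∧ j = m) ∨ (i = m ∧ j = 0))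
    {j : ℕ} (hj1 : 1 ≤ j) (hjm : j < m) :
    a (u j) (u (j + 1)) = a (u j) (u (j - 1)) := by
  have hne : ∀ i ≤ m, i ≠ j → u i ≠ u j := by
    intro i him hij hequ
    rcases hinj i him j hjm.le hij hequ with ⟨hi0, hjm'⟩ | ⟨him', hj0⟩ <;> omega
  have hedge : ∀ i < m, u i ≠ u j → u (i + 1) ≠ u j →
      a (u j) (u i) = a (u j) (u (i + 1)) := by
    intro i him h1 h2
    rcases hwalk i him with hc | hc
    · exact hP2 _ _ _ hc.lt h1.symm h2.symm
    · exact (hP2 _ _ _ hc.lt h2.symm h1.symm).symm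
  have S1 : ∀ d, j + 1 + d ≤ m → a (u j) (u (j + 1 + d)) = a (u j) (u (j + 1)) := by
    intro d
    induction d with
    | zero => intro _; rfl
    | succ d ih =>
      intro hd
      have h1 : j + 1 + d < m := by omega
      have := hedge (j + 1 + d) h1 (hne _ (by omega) (by omega)) (hne _ (by omega) (by omega))
      calc a (u j) (u (j + 1 + (d + 1))) = a (u j) (u (j + 1 + d)) := this.symm
        _ = a (u j) (u (j + 1)) := ih (by omega)
  have S2 : ∀ d, d ≤ j - 1 → a (u j) (u d) = a (u j) (u 0) := by
    intro d
    induction d with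
    | zero => intro _; rfl
    | succ d ih =>
      intro hd
      have h1 : d < m := by omega
      have := hedge d h1 (hne _ (by omega) (by omega)) (hne _ (by omega) (by omega))
      calc a (u j) (u (d + 1)) = a (u j) (u d) := this.symm
        _ = a (u j) (u 0) := ih (by omega)
  have hm' : j + 1 + (m - (j + 1)) = m := by omega
  have e1 : a (u j) (u m) = a (u j) (u (j + 1)) := by
    have := S1 (m - (j + 1)) (by omega)
    rwa [hm'] at this
  have e2 : a (u j) (u (j - 1)) = a (u j) (u 0) := S2 (j - 1) le_rfl
  rw [← e1, hclose, ← e2]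

lemma sOf_cycles (hP1 : ∀ x y : X, x < y → a x x - a x y = a y y - a y x)
    (hP2 : ∀ x y z : X, x < y → z ≠ x → z ≠ y → a z x = a z y) :
    ConstOnCycles (K := K) (fun p => sOf a p.1.1 p.1.2) := by
  intro u m hcyc
  obtain ⟨hwalk, hclose, hm4, hinj⟩ := hcyc
  set F : ℕ → K := fun i => a (u i) (u i) - a (u i) (u (i + 1)) with hF
  have hFalt : ∀ i < m, F i = a (u (i + 1)) (u (i + 1)) - a (u (i + 1)) (u i) := by
    intro i him
    rcases hwalk i him with hc | hc
    · exact hP1 _ _ hc.lt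
    · exact (hP1 _ _ hc.lt).symm
  have hstep : ∀ i, i + 1 < m → F (i + 1) = F i := by
    intro i him
    have har := sOf_around hP2 hwalk hclose hinj (j := i + 1) (by omega) him
    have : F (i + 1) = a (u (i + 1)) (u (i + 1)) - a (u (i + 1)) (u (i + 1 + 1)) := rfl
    rw [this, har]
    simp only [Nat.add_sub_cancel]
    exact (hFalt i (by omega)).symm
  have hconst : ∀ i < m, F i = F 0 := by
    intro i
    induction i with
    | zero => intro _; rfl
    | succ i ih =>
      intro him
      rw [hstep i him, ih (by omega)]
  refine ⟨F 0, ?_⟩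
  intro i him
  constructor
  · intro h
    show a (u i) (u i) - a (u i) (u (i + 1)) = F 0
    exact hconst i him
  · intro h
    show a (u (i + 1)) (u (i + 1)) - a (u (i + 1)) (u i) = F 0
    rw [← hFalt i him]
    exact hconst i him

end Comb

section Kappa
set_option linter.unusedSectionVars false
set_option maxHeartbeats 1000000

variable {K X : Type*} [Field K] [CharZero K] [PartialOrder X] [Fintype X]
    [LocallyFiniteOrder X] [DecidableEq X]

/-- The map `φ_κ : f ↦ (Σ_x κ(x) f(x,x)) • 1`. -/
def phiKappa (κ : X → K) : IncidenceAlgebra K X →ₗ[K] IncidenceAlgebra K X where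
  toFun f := (∑ x : X, κ x * f x x) • (1 : IncidenceAlgebra K X)
  map_add' f g := by
    have h : ∑ x : X, κ x * (f + g) x x
        = (∑ x : X, κ x * f x x) + ∑ x : X, κ x * g x x := by
      rw [← Finset.sum_add_distrib]
      exact Finset.sum_congr rfl fun x _ => by rw [IncidenceAlgebra.add_apply]; ring
    rw [h, add_smul]
  map_smul' c f := by
    have h : ∑ x : X, κ x * (c • f) x x = c * ∑ x : X, κ x * f x x := by
      rw [Finset.mul_sum]
      exact Finset.sum_congr rfl fun x _ => by
        rw [IncidenceAlgebra.constSMul_apply, smul_eq_mul]; ring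
    simp only [RingHom.id_apply]
    rw [h, mul_smul]

lemma phiKappa_apply (κ : X → K) (f : IncidenceAlgebra K X) :
    phiKappa κ f = (∑ x : X, κ x * f x x) • (1 : IncidenceAlgebra K X) := rfl

lemma phiKappa_ex (κ : X → K) (x : X) :
    phiKappa κ (eI K x x le_rfl) = κ x • (1 : IncidenceAlgebra K X) := by
  rw [phiKappa_apply]
  congr 1
  simp [eI_apply]

lemma phiKappa_lt (κ : X → K) (x y : X) (h : x < y) :
    phiKappa κ (eI K x y h.le) = 0 := by
  rw [phiKappa_apply]
  have : ∑ z : X, κ z * eI K x y h.le z z = 0 := by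
    apply Finset.sum_eq_zero
    intro z _
    rw [eI_apply, if_neg, mul_zero]
    rintro ⟨rfl, rfl⟩; exact h.ne rfl
  rw [this, zero_smul]

lemma phiKappa_lie (κ : X → K) (a b : IncidenceAlgebra K X) :
    phiKappa κ ⁅a, b⁆ = 0 := by
  rw [phiKappa_apply]
  have : ∑ z : X, κ z * (⁅a, b⁆ : IncidenceAlgebra K X) z z = 0 := by
    apply Finset.sum_eq_zero
    intro z _
    rw [lie_diag_entry, mul_zero]
  rw [this, zero_smul]

lemma phiKappa_lie_left (κ : X → K) (f b : IncidenceAlgebra K X) :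
    ⁅phiKappa κ f, b⁆ = 0 := by
  simp [phiKappa_apply, Ring.lie_def, Algebra.mul_smul_comm, Algebra.smul_mul_assoc]

lemma phiKappa_lie_right (κ : X → K) (f b : IncidenceAlgebra K X) :
    ⁅b, phiKappa κ f⁆ = 0 := by
  simp [phiKappa_apply, Ring.lie_def, Algebra.mul_smul_comm, Algebra.smul_mul_assoc]

lemma phiKappa_diag (κ : X → K) (f : IncidenceAlgebra K X) : IsDiagI (phiKappa κ f) := by
  intro x y hxy
  rw [phiKappa_apply, IncidenceAlgebra.constSMul_apply, IncidenceAlgebra.one_apply,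
    if_neg hxy, smul_zero]

end Kappa

/-- every diagonality-preserving `1/2`-derivation `φ` of `I(X,K)` is
uniquely `φ = φ_σ + φ_κ`, where `σ : X²_< → K` is constant on chains and cycles,
`κ : X → K`, `φ_σ` is the diagonality-preserving `1/2`-derivation with
`φ_σ e_{xy} = σ(x,y) e_{xy}` and `φ_σ(e_x)(u0,u0) = 0`, and `φ_κ` is the linear map
with `φ_κ e_x = κ(x) δ` and `φ_κ e_{xy} = 0` for `x < y`. -/
theorem statement16 (K X : Type*) [Field K] [CharZero K] [PartialOrder X] [Fintype X]
    [LocallyFiniteOrder X] [DecidableEq X] (hconn : ConnectedPoset X) (u0 : X)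
    (φ : IncidenceAlgebra K X →ₗ[K] IncidenceAlgebra K X)
    (hφ : IsHalfDerivation K (IncidenceAlgebra K X) φ)
    (hdiag : ∀ f : IncidenceAlgebra K X, IsDiagI f → IsDiagI (φ f)) :
    ∃! p : (LtPairs X → K) × (X → K),
      ConstOnChains p.1 ∧ ConstOnCycles p.1 ∧
      ∃ φσ φκ : IncidenceAlgebra K X →ₗ[K] IncidenceAlgebra K X,
        IsHalfDerivation K (IncidenceAlgebra K X) φσ ∧
        (∀ f : IncidenceAlgebra K X, IsDiagI f → IsDiagI (φσ f)) ∧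
        (∀ (x y : X) (h : x < y), φσ (eI K x y h.le) = p.1 ⟨(x, y), h⟩ • eI K x y h.le) ∧
        (∀ x : X, φσ (eI K x x le_rfl) u0 u0 = 0) ∧
        (∀ x : X, φκ (eI K x x le_rfl) = p.2 x • (1 : IncidenceAlgebra K X)) ∧
        (∀ (x y : X) (h : x < y), φκ (eI K x y h.le) = 0) ∧
        (∀ a : IncidenceAlgebra K X, φ a = φσ a + φκ a) := by
  classical
  set a : X → X → K := fun x z => φ (eI K x x le_rfl) z z with ha
  have hP1 : ∀ x y : X, x < y → a x x - a x y = a y y - a y x := fun x y h =>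
    sig_symm φ hφ hdiag x y h
  have hP2 : ∀ x y z : X, x < y → z ≠ x → z ≠ y → a z x = a z y := fun x y z h h1 h2 =>
    diag_const φ hφ hdiag x y z h h1 h2
  set σ : LtPairs X → K := fun p => sOf a p.1.1 p.1.2 with hσ
  set κ : X → K := fun x => a x u0 with hκ
  have hBB : ∀ (x y : X) (h : x < y),
      φ (eI K x y h.le) = sOf a x y • eI K x y h.le := fun x y h =>
    phi_e_lt φ hφ hdiag x y h
  refine ⟨(σ, κ), ⟨?_, ?_, ?_⟩, ?_⟩
  · -- constant on chains
    intro x y u v h1 h2 c1 _ _ c4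
    exact sOf_chains hP1 hP2 h1 h2 c1 c4
  · -- constant on cycles
    exact sOf_cycles hP1 hP2
  · -- existence of φσ, φκ
    refine ⟨φ - phiKappa κ, phiKappa κ, ?_, ?_, ?_, ?_, ?_, ?_, ?_⟩
    · intro f g
      rw [LinearMap.sub_apply, phiKappa_lie, sub_zero, hφ f g,
        LinearMap.sub_apply, LinearMap.sub_apply, sub_lie, phiKappa_lie_left, sub_zero,
        lie_sub, phiKappa_lie_right, sub_zero]
    · intro f hf x y hxy
      rw [LinearMap.sub_apply, IncidenceAlgebra.sub_apply, hdiag f hf x y hxy,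
        phiKappa_diag κ f x y hxy, sub_zero]
    · intro x y h
      rw [LinearMap.sub_apply, phiKappa_lt κ x y h, sub_zero, hBB x y h]
    · intro x
      rw [LinearMap.sub_apply, IncidenceAlgebra.sub_apply, phiKappa_ex,
        IncidenceAlgebra.constSMul_apply, IncidenceAlgebra.one_apply, if_pos rfl,
        smul_eq_mul, mul_one]
      exact sub_self _
    · intro x
      exact phiKappa_ex κ x
    · intro x y h
      exact phiKappa_lt κ x y h
    · intro f
      rw [LinearMap.sub_apply, sub_add_cancel]
  · -- uniqueness
    rintro ⟨q1, q2⟩ ⟨-, -, φσ', φκ', -, -, h3', h4', h5', h6', h7'⟩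
    have hq1 : q1 = σ := by
      funext p
      obtain ⟨⟨x, y⟩, h⟩ := p
      have h7 := h7' (eI K x y h.le)
      rw [h3' x y h, h6' x y h, add_zero, hBB x y h] at h7
      have := congrArg (fun g : IncidenceAlgebra K X => g x y) h7
      simp only [IncidenceAlgebra.constSMul_apply, smul_eq_mul] at this
      rw [eI_apply, if_pos ⟨rfl, rfl⟩, mul_one, mul_one] at this
      exact this.symm
    have hq2 : q2 = κ := by
      funext x
      have h7 := h7' (eI K x x le_rfl)
      have := congrArg (fun g : IncidenceAlgebra K X => g u0 u0) h7
      simp only [IncidenceAlgebra.add_apply] at this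
      rw [h4' x, h5' x, IncidenceAlgebra.constSMul_apply, IncidenceAlgebra.one_apply,
        if_pos rfl, smul_eq_mul, mul_one, zero_add] at this
      exact this.symm
    rw [hq1, hq2]
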